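/- Let σ > 0 and let μ satisfy 0 < μ < μ₂(σ), where μ₂(σ) = 1/(σ + 4). Then the radicand (σ² + 4σ)μ² − 2(σ + 2)μ + 1 is strictly positive, the convergent displacement satisfies −1/2 < δ(σ,μ) < 0, and both points (1/2 + δ(σ,μ), 1/2 + δ(σ,μ)) and (1/2 − δ(σ,μ), 1/2 − δ(σ,μ)) are equilibria of the fully symmetric convergence–divergence game. -/

import Mathlib

noncomputable def F1 (σ μ x y : ℝ) : ℝ :=
  ((1 - x) - μ) * x * (x + σ * x * (1 - y)) - (x - μ) * (1 - x) * ((1 - x) + σ * (1 - x) * y)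

noncomputable def F2 (σ μ x y : ℝ) : ℝ :=
  ((1 - y) - μ) * y * (y + σ * y * (1 - x)) - (y - μ) * (1 - y) * ((1 - y) + σ * (1 - y) * x)

noncomputable def deltaD (σ μ : ℝ) : ℝ :=
  Real.sqrt ((σ^2 + 4 * σ) * μ^2 - 2 * (σ + 2) * μ + 1) / (2 * (σ * μ - 1))

theorem convergent_equilibria_exist (σ μ : ℝ) (hσ : 0 < σ)
    (hlo : 0 < μ) (hhi : μ < 1 / (σ + 4)) :
    0 < (σ^2 + 4 * σ) * μ^2 - 2 * (σ + 2) * μ + 1 ∧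
    -(1/2) < deltaD σ μ ∧ deltaD σ μ < 0 ∧
    (F1 σ μ (1/2 + deltaD σ μ) (1/2 + deltaD σ μ) = 0 ∧
      F2 σ μ (1/2 + deltaD σ μ) (1/2 + deltaD σ μ) = 0) ∧
    (F1 σ μ (1/2 - deltaD σ μ) (1/2 - deltaD σ μ) = 0 ∧
      F2 σ μ (1/2 - deltaD σ μ) (1/2 - deltaD σ μ) = 0) := by
  have h4 : (0:ℝ) < σ + 4 := by linarith
  have hμ4 : (σ + 4) * μ < 1 := by
    have := (lt_div_iff₀ h4).mp hhi
    linarith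
  have hc : σ * μ - 1 < 0 := by nlinarith
  set R : ℝ := (σ^2 + 4 * σ) * μ^2 - 2 * (σ + 2) * μ + 1 with hRdef
  have hfac : R = (σ * μ - 1) * ((σ + 4) * μ - 1) := by rw [hRdef]; ring
  have hR : 0 < R := by
    rw [hfac]; exact mul_pos_of_neg_of_neg hc (by linarith)
  set s : ℝ := Real.sqrt R with hsdef
  have hs : 0 < s := Real.sqrt_pos.mpr hR
  have hs2 : s ^ 2 = R := Real.sq_sqrt hR.le
  have hslt : s < 1 - σ * μ := by
    rw [hsdef]
    refine (Real.sqrt_lt' (by linarith)).mpr ?_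
    rw [hfac]; nlinarith
  have h2c : 2 * (σ * μ - 1) ≠ 0 := by nlinarith
  have hdd : deltaD σ μ = s / (2 * (σ * μ - 1)) := rfl
  set d : ℝ := deltaD σ μ with hddef
  have hmul : 2 * (σ * μ - 1) * d = s := by
    rw [hdd]; field_simp; exact div_self hc.ne
  have hsq : (2 * (σ * μ - 1) * d) ^ 2 = R := by rw [hmul, hs2]
  have hneg : 2 * (σ * μ - 1) < 0 := by linarith
  have hub : d < 0 := by
    rw [hdd]; exact div_neg_of_pos_of_neg hs hneg
  have hlb : -(1/2) < d := by
    rw [hdd, lt_div_iff_of_neg hneg]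
    nlinarith
  have key : ∀ t : ℝ, 2 * (σ * μ - 1) * F1 σ μ (1/2 + t) (1/2 + t) =
      t * ((2 * (σ * μ - 1) * t) ^ 2 - R) := by
    intro t; simp only [F1, hRdef]; ring
  have key2 : ∀ t : ℝ, 2 * (σ * μ - 1) * F2 σ μ (1/2 + t) (1/2 + t) =
      t * ((2 * (σ * μ - 1) * t) ^ 2 - R) := by
    intro t; simp only [F2, hRdef]; ring
  have hsqneg : (2 * (σ * μ - 1) * (-d)) ^ 2 = R := by
    rw [show 2 * (σ * μ - 1) * (-d) = -(2 * (σ * μ - 1) * d) by ring, neg_pow,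
      hsq]; ring
  refine ⟨hR, hlb, hub, ⟨?_, ?_⟩, ?_⟩
  · have h0 := key d
    rw [hsq, sub_self, mul_zero] at h0
    exact (mul_eq_zero.mp h0).resolve_left h2c
  · have h0 := key2 d
    rw [hsq, sub_self, mul_zero] at h0
    exact (mul_eq_zero.mp h0).resolve_left h2c
  · have e : (1:ℝ)/2 - d = 1/2 + (-d) := by ring
    rw [e]
    constructor
    · have h0 := key (-d)
      rw [hsqneg, sub_self, mul_zero] at h0
      exact (mul_eq_zero.mp h0).resolve_left h2c
    · have h0 := key2 (-d)
      rw [hsqneg, sub_self, mul_zero] at h0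
      exact (mul_eq_zero.mp h0).resolve_left h2c
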